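/- For every b with √2(4-π)/(π-2√2) < b < 4, f_b(1) < π/2 = arcsin(1), so the function x ↦ (f_b(x) - arcsin(x))/x³ is negative at x = 1 while its limit at 0⁺ is positive, hence it has a zero in (0,1). -/

import Mathlib

noncomputable def f (β x : ℝ) : ℝ :=
  (β + 2) * (Real.sqrt (1 + x) - Real.sqrt (1 - x)) /
    (β + Real.sqrt (1 + x) + Real.sqrt (1 - x))

set_option maxHeartbeats 2000000 in
theorem keylem (s t b : ℝ) (hs0 : 0 < s) (ht0 : 0 < t) (hb : 0 < b)
    (ht : t^2 = 2 - s^2) :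
    ((b+2)*(1/(2*s)+1/(2*t))*(b+s+t) - (b+2)*(s-t)*(1/(2*s)-1/(2*t)))/(b+s+t)^2 - 1/(s*t)
    = (s^2-1)^2 * (-(b^2-2*b-4-2*(s+t)) / ((1+s*t)*(s+t+2)*(s*t)*(b+s+t)^2)) := by
  have h1 : s ≠ 0 := hs0.ne'
  have h2 : t ≠ 0 := ht0.ne'
  have h3 : b+s+t ≠ 0 := by positivity
  have h4 : (1:ℝ)+s*t ≠ 0 := by positivity
  have h5 : s+t+2 ≠ 0 := by positivity
  field_simp
  linear_combination ((2)*s^2*b^2 + s*t*b^2 + b^2 + (2)*s^2*t*b + (2)*s*t^2*b + (2)*s*t*b + (2)*s*b + (2)*t*b + (2)*b + (-4)*s^2*b + (-2)*s^2*t + (2)*s*t^2 + (4)*s*t + (2)*s + (2)*t + 4 + (-4)*s^3 + (-8)*s^2) * ht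

noncomputable def psi (b x : ℝ) : ℝ :=
  -(b^2-2*b-4-2*(Real.sqrt (1+x)+Real.sqrt (1-x))) /
    ((1+Real.sqrt (1+x)*Real.sqrt (1-x))*(Real.sqrt (1+x)+Real.sqrt (1-x)+2)*
      (Real.sqrt (1+x)*Real.sqrt (1-x))*(b+Real.sqrt (1+x)+Real.sqrt (1-x))^2)

theorem derivlem (b : ℝ) (hb : 0 < b) (x : ℝ) (hx : x ∈ Set.Ioo (0:ℝ) (1/2)) :
    HasDerivAt (fun y => f b y - Real.arcsin y) (x^2 * psi b x) x := by
  obtain ⟨hx0, hx12⟩ := hx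
  have h1x : (0:ℝ) < 1 + x := by linarith
  have h1x' : (0:ℝ) < 1 - x := by linarith
  set s := Real.sqrt (1+x) with hsdef
  set t := Real.sqrt (1-x) with htdef
  have hs0 : 0 < s := Real.sqrt_pos.2 h1x
  have ht0 : 0 < t := Real.sqrt_pos.2 h1x'
  have hs : s^2 = 1+x := Real.sq_sqrt h1x.le
  have ht : t^2 = 1-x := Real.sq_sqrt h1x'.le
  have hS : HasDerivAt (fun y : ℝ => Real.sqrt (1+y)) (1/(2*s)) x := by
    have h := (Real.hasDerivAt_sqrt (ne_of_gt h1x)).comp x ((hasDerivAt_id x).const_add (1:ℝ))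
    simpa [Function.comp_def, hsdef] using h
  have hT : HasDerivAt (fun y : ℝ => Real.sqrt (1-y)) (-(1/(2*t))) x := by
    have h := (Real.hasDerivAt_sqrt (ne_of_gt h1x')).comp x ((hasDerivAt_id x).const_sub (1:ℝ))
    have : (1/(2*Real.sqrt (1-x))) * (-1) = -(1/(2*t)) := by rw [htdef]; ring
    simpa [Function.comp_def, this] using h
  have hden : HasDerivAt (fun y : ℝ => b + Real.sqrt (1+y) + Real.sqrt (1-y))
      (1/(2*s) + -(1/(2*t))) x := by
    have := ((hasDerivAt_const x b).add hS).add hT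
    simpa [Pi.add_def] using this
  have hdne : b + s + t ≠ 0 := by positivity
  have hnum : HasDerivAt (fun y : ℝ => (b+2) * (Real.sqrt (1+y) - Real.sqrt (1-y)))
      ((b+2) * (1/(2*s) - -(1/(2*t)))) x := (hS.sub hT).const_mul (b+2)
  have hf : HasDerivAt (f b)
      (((b+2)*(1/(2*s) - -(1/(2*t))) * (b+s+t) -
        (b+2)*(s-t) * (1/(2*s) + -(1/(2*t)))) / (b+s+t)^2) x := by
    have h := hnum.div hden hdne
    exact h
  have ha : HasDerivAt Real.arcsin (1/Real.sqrt (1-x^2)) x :=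
    Real.hasDerivAt_arcsin (by linarith) (by linarith)
  have hst : Real.sqrt (1-x^2) = s*t := by
    rw [show (1-x^2 : ℝ) = (1+x)*(1-x) by ring, Real.sqrt_mul h1x.le]
  have key := keylem s t b hs0 ht0 hb (by linarith)
  have hx2 : s^2 - 1 = x := by linarith
  have eq1 : ((b+2)*(1/(2*s) - -(1/(2*t))) * (b+s+t) -
        (b+2)*(s-t) * (1/(2*s) + -(1/(2*t)))) / (b+s+t)^2 - 1/Real.sqrt (1-x^2)
      = x^2 * psi b x := by
    rw [hst]
    calc ((b+2)*(1/(2*s) - -(1/(2*t))) * (b+s+t) -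
        (b+2)*(s-t) * (1/(2*s) + -(1/(2*t)))) / (b+s+t)^2 - 1/(s*t)
        = ((b+2)*(1/(2*s)+1/(2*t))*(b+s+t) - (b+2)*(s-t)*(1/(2*s)-1/(2*t)))/(b+s+t)^2
          - 1/(s*t) := by ring
      _ = (s^2-1)^2 * (-(b^2-2*b-4-2*(s+t)) / ((1+s*t)*(s+t+2)*(s*t)*(b+s+t)^2)) := key
      _ = x^2 * psi b x := by rw [hx2]; rfl
  exact eq1 ▸ (hf.sub ha)

theorem stmt_17 (b : ℝ)
    (hb₁ : Real.sqrt 2 * (4 - Real.pi) / (Real.pi - 2 * Real.sqrt 2) < b) (hb₂ : b < 4) :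
    f b 1 < Real.pi / 2 ∧ Real.arcsin 1 = Real.pi / 2 ∧
    (f b 1 - Real.arcsin 1) / (1:ℝ) ^ 3 < 0 ∧
    Filter.Tendsto (fun x : ℝ => (f b x - Real.arcsin x) / x ^ 3)
      (nhdsWithin 0 (Set.Ioi 0)) (nhds ((4 - b) / (24 * (2 + b)))) ∧
    0 < (4 - b) / (24 * (2 + b)) ∧
    ∃ x ∈ Set.Ioo (0:ℝ) 1, (f b x - Real.arcsin x) / x ^ 3 = 0 := by
  have hpi1 : Real.pi > 3.141592 := Real.pi_gt_d6
  have hpi2 : Real.pi < 3.15 := Real.pi_lt_d2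
  have hs2u : Real.sqrt 2 < 1.4143 := by
    rw [show (1.4143:ℝ) = Real.sqrt (1.4143^2) by rw [Real.sqrt_sq]; norm_num]
    exact Real.sqrt_lt_sqrt (by norm_num) (by norm_num)
  have hs2l : (1.414:ℝ) < Real.sqrt 2 := by
    rw [show (1.414:ℝ) = Real.sqrt (1.414^2) by rw [Real.sqrt_sq]; norm_num]
    exact Real.sqrt_lt_sqrt (by norm_num) (by norm_num)
  have hgap : 0 < Real.pi - 2 * Real.sqrt 2 := by nlinarith
  have hb0 : 0 < b := by
    have h0 : 0 < Real.sqrt 2 * (4 - Real.pi) / (Real.pi - 2 * Real.sqrt 2) := by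
      apply div_pos _ hgap
      apply mul_pos (by positivity)
      linarith
    linarith
  have hprod : Real.sqrt 2 * (4 - Real.pi) < b * (Real.pi - 2 * Real.sqrt 2) :=
    (div_lt_iff₀ hgap).1 hb₁
  have hf1 : f b 1 = (b+2) * Real.sqrt 2 / (b + Real.sqrt 2) := by
    simp [f, show (1:ℝ)+1 = 2 by norm_num]
  have part1 : f b 1 < Real.pi / 2 := by
    rw [hf1, div_lt_iff₀ (by positivity)]
    nlinarith
  have part2 : Real.arcsin 1 = Real.pi / 2 := Real.arcsin_one
  have part3 : (f b 1 - Real.arcsin 1) / (1:ℝ) ^ 3 < 0 := by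
    rw [part2]; norm_num; linarith
  have hL : (0:ℝ) < (4 - b) / (24 * (2 + b)) := by
    apply div_pos (by linarith) (by linarith)
  have part4 : Filter.Tendsto (fun x : ℝ => (f b x - Real.arcsin x) / x ^ 3)
      (nhdsWithin 0 (Set.Ioi 0)) (nhds ((4 - b) / (24 * (2 + b)))) := by
    apply HasDerivAt.lhopital_zero_right_on_Ioo (show (0:ℝ) < 1/2 by norm_num)
      (f' := fun x => x^2 * psi b x) (g' := fun x => 3 * x^2)
      (derivlem b hb0)
    · intro x _
      simpa using hasDerivAt_pow 3 x
    · intro x hx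
      have : (0:ℝ) < x := hx.1
      positivity
    · have hc : ContinuousAt (fun y => f b y - Real.arcsin y) 0 := by
        apply ContinuousAt.sub
        · apply ContinuousAt.div
          · fun_prop
          · fun_prop
          · simp; positivity
        · exact Real.continuous_arcsin.continuousAt
      have h0 : f b 0 - Real.arcsin 0 = 0 := by simp [f]
      have ht := hc.tendsto
      rw [h0] at ht
      exact tendsto_nhdsWithin_of_tendsto_nhds ht
    · have : Filter.Tendsto (fun x : ℝ => x ^ 3) (nhds 0) (nhds 0) := by
        simpa using (continuous_pow 3).tendsto (0:ℝ)
      exact tendsto_nhdsWithin_of_tendsto_nhds this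
    · have hcpsi0 : ContinuousAt (psi b) 0 := by
        unfold psi
        apply ContinuousAt.div
        · fun_prop
        · fun_prop
        · simp
          exact ⟨by norm_num, by intro h; nlinarith⟩
      have hcpsi : ContinuousAt (fun x => psi b x / 3) 0 := hcpsi0.div_const 3
      have hval : psi b 0 / 3 = (4 - b) / (24 * (2 + b)) := by
        unfold psi
        simp
        rw [div_div]
        rw [div_eq_div_iff (by positivity) (by positivity)]
        ring
      have h1 : Filter.Tendsto (fun x => psi b x / 3) (nhdsWithin 0 (Set.Ioi 0))
          (nhds ((4 - b) / (24 * (2 + b)))) := by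
        rw [← hval]
        exact tendsto_nhdsWithin_of_tendsto_nhds hcpsi.tendsto
      apply h1.congr'
      filter_upwards [self_mem_nhdsWithin] with x hx
      have hx0 : x ≠ 0 := ne_of_gt hx
      field_simp
  have part6 : ∃ x ∈ Set.Ioo (0:ℝ) 1, (f b x - Real.arcsin x) / x ^ 3 = 0 := by
    have hev : ∀ᶠ x in nhdsWithin 0 (Set.Ioi 0),
        0 < (f b x - Real.arcsin x) / x ^ 3 := part4.eventually (eventually_gt_nhds hL)
    have hev2 : ∀ᶠ x in nhdsWithin (0:ℝ) (Set.Ioi 0), x < 1 :=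
      eventually_nhdsWithin_of_eventually_nhds (eventually_lt_nhds (show (0:ℝ) < 1 by norm_num))
    have hev3 : ∀ᶠ x in nhdsWithin 0 (Set.Ioi 0), x ∈ Set.Ioi (0:ℝ) := self_mem_nhdsWithin
    obtain ⟨x₀, hQ, hx1, hx0⟩ := (hev.and (hev2.and hev3)).exists
    have hx0' : (0:ℝ) < x₀ := hx0
    have hcont : ContinuousOn (fun x => (f b x - Real.arcsin x) / x ^ 3) (Set.Icc x₀ 1) := by
      apply ContinuousOn.div
      · apply ContinuousOn.sub
        · apply ContinuousOn.div
          · fun_prop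
          · fun_prop
          · intro x hx
            have h1 : (0:ℝ) ≤ 1 + x := by have := hx.1; nlinarith
            have := Real.sqrt_nonneg (1+x)
            have := Real.sqrt_nonneg (1-x)
            positivity
        · exact Real.continuous_arcsin.continuousOn
      · fun_prop
      · intro x hx
        have : (0:ℝ) < x := lt_of_lt_of_le hx0' hx.1
        positivity
    have hsub := intermediate_value_Ioo' (le_of_lt hx1) hcont
    have h0mem : (0:ℝ) ∈ Set.Ioo ((f b 1 - Real.arcsin 1) / (1:ℝ)^3)
        ((f b x₀ - Real.arcsin x₀) / x₀ ^ 3) := ⟨part3, hQ⟩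
    obtain ⟨x, hxmem, hxval⟩ := hsub h0mem
    exact ⟨x, ⟨lt_trans hx0' hxmem.1, hxmem.2⟩, hxval⟩
  exact ⟨part1, part2, part3, part4, hL, part6⟩
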